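/- For every m ≥ 1, the first five occurrences of E_{m,2} in the doubling sequence D∞ start at positions L(E_{m,2},1) = 2^m+1, L(E_{m,2},2) = 3·2^{m−1}+1, L(E_{m,2},3) = 10·2^{m−1}+1, L(E_{m,2},4) = 11·2^{m−1}+1, and L(E_{m,2},5) = 14·2^{m−1}+1. -/

import Mathlib

namespace PD

/-- The period-doubling substitution on the alphabet `Bool`,
where `false` stands for the letter `a` and `true` for the letter `b`:
`σ(a) = ab`, `σ(b) = aa`. -/
def sub : Bool → List Bool
  | false => [false, true]
  | true  => [false, false]

/-- The substitution applied to a finite word. -/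
def subW (w : List Bool) : List Bool := w.flatMap sub

/-- `A m = σ^m(a)`. -/
def A (m : ℕ) : List Bool := subW^[m] [false]

/-- `B m = σ^m(b)`. -/
def B (m : ℕ) : List Bool := subW^[m] [true]

/-- The doubling sequence `D∞` (0-indexed: `D n` is the `(n+1)`-th letter),
the fixed point of `σ` beginning with `a`; `A m` is a prefix of `A (m+1)`,
and `A (n+1)` has length `2^(n+1) > n`. -/
def D (n : ℕ) : Bool := (A (n + 1)).getD n false

/-- `δ m`, the last letter of `A m`. -/
def delta (m : ℕ) : Bool := (A m).getLastD false

/-- The envelope words (`i ∈ {1,2}`): `E m 1 = A m` minus its last letter,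
`E m 2 = A (m-1) ++ (A m` minus its last letter `)`. -/
def E (m i : ℕ) : List Bool :=
  if i = 1 then (A m).dropLast else A (m - 1) ++ (A m).dropLast

/-- `w` occurs at the (1-indexed) position `j` in the finite word `τ`. -/
def OccursIn (w τ : List Bool) (j : ℕ) : Prop :=
  1 ≤ j ∧ (τ.drop (j - 1)).take w.length = w

/-- `w` occurs at the (1-indexed) position `j` in the doubling sequence. -/
def OccursD (w : List Bool) (j : ℕ) : Prop :=
  1 ≤ j ∧ ∀ k < w.length, D (j - 1 + k) = w.getD k false

/-- `w` is a factor of the doubling sequence. -/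
def FactorD (w : List Bool) : Prop := ∃ j, OccursD w j

/-- `L w p`: the (1-indexed) starting position of the `p`-th occurrence of `w`
in the doubling sequence, occurrences being ordered by starting position.
(Each factor occurs infinitely often, so `Nat.nth` enumerates all occurrences
in increasing order.) -/
noncomputable def L (w : List Bool) (p : ℕ) : ℕ := Nat.nth (OccursD w) (p - 1)

/-- The strict total order on envelope words:
`E m₁ i₁ ⊏ E m₂ i₂` iff `m₁ < m₂`, or `m₁ = m₂` and `i₁ < i₂`. -/
def EnvLt (m₁ i₁ m₂ i₂ : ℕ) : Prop := m₁ < m₂ ∨ (m₁ = m₂ ∧ i₁ < i₂)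

/-- `Env(w) = E m i`: the envelope word `E m i` is the `⊏`-minimal envelope
word containing `w` as a factor. -/
def IsEnv (w : List Bool) (m i : ℕ) : Prop :=
  1 ≤ m ∧ (i = 1 ∨ i = 2) ∧ w <:+: E m i ∧
    ∀ m' i', 1 ≤ m' → (i' = 1 ∨ i' = 2) → EnvLt m' i' m i → ¬ w <:+: E m' i'

/-- The substitution `φ₁(a) = a`, `φ₁(b) = bb`. -/
def phi1 : Bool → List Bool
  | false => [false]
  | true  => [true, true]

/-- `Θ₁ = φ₁(D∞)` (0-indexed): `φ₁(A (n+1))` is a prefix of `Θ₁` of length `> n`. -/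
def Theta1 (n : ℕ) : Bool := ((A (n + 1)).flatMap phi1).getD n false

/-- The substitution `φ₂(a) = ab`, `φ₂(b) = acac`, over the alphabet `Fin 3`
where `0` stands for `a`, `1` for `b` and `2` for `c`. -/
def phi2 : Bool → List (Fin 3)
  | false => [0, 1]
  | true  => [0, 2, 0, 2]

/-- `Θ₂ = φ₂(D∞)` (0-indexed). -/
def Theta2 (n : ℕ) : Fin 3 := ((A (n + 1)).flatMap phi2).getD n 0

/-- `N₁(x,p)`: the number of letters `x` among the first `p` letters of `Θ₁`. -/
def N1 (x : Bool) (p : ℕ) : ℕ := ((List.range p).map Theta1).count x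

/-- `N₂(x,p)`: the number of letters `x` among the first `p` letters of `Θ₂`. -/
def N2 (x : Fin 3) (p : ℕ) : ℕ := ((List.range p).map Theta2).count x

end PD

namespace PD

lemma sub_eq (x : Bool) : sub x = [false, !x] := by cases x <;> rfl

lemma subW_cons (x : Bool) (w : List Bool) : subW (x :: w) = false :: (!x) :: subW w := by
  cases x <;> rfl

lemma subW_append (u v : List Bool) : subW (u ++ v) = subW u ++ subW v := by
  simp [subW]

lemma length_subW (w : List Bool) : (subW w).length = 2 * w.length := by
  induction w with
  | nil => rfl
  | cons x w ih => rw [subW_cons]; simp only [List.length_cons, ih]; omega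

lemma A_succ (k : ℕ) : A (k + 1) = subW (A k) := Function.iterate_succ_apply' subW k [false]

lemma length_A (k : ℕ) : (A k).length = 2 ^ k := by
  induction k with
  | zero => rfl
  | succ k ih => rw [A_succ, length_subW, ih, pow_succ]; ring

lemma A_prefix_succ (k : ℕ) : A k <+: A (k + 1) := by
  induction k with
  | zero => exact ⟨[true], rfl⟩
  | succ k ih =>
    obtain ⟨t, ht⟩ := ih
    exact ⟨subW t, by rw [A_succ, A_succ, ← subW_append, ht]⟩

lemma A_prefix {k l : ℕ} (h : k ≤ l) : A k <+: A l := by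
  induction l, h using Nat.le_induction with
  | base => exact List.prefix_refl _
  | succ l hl ih => exact ih.trans (A_prefix_succ l)

lemma getD_of_prefix {u v : List Bool} (h : u <+: v) {i : ℕ} (hi : i < u.length) :
    v.getD i false = u.getD i false := by
  obtain ⟨t, rfl⟩ := h
  rw [List.getD_append _ _ _ _ hi]

lemma D_eq {n k : ℕ} (h : n < 2 ^ k) : D n = (A k).getD n false := by
  unfold D
  have hn : n < (A (n + 1)).length := by
    rw [length_A]
    exact lt_of_lt_of_le (Nat.lt_two_pow_self (n := n)) (Nat.pow_le_pow_right (by norm_num) (Nat.le_succ n))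
  rcases le_total k (n + 1) with hk | hk
  · exact getD_of_prefix (A_prefix hk) (by rw [length_A]; exact h)
  · exact (getD_of_prefix (A_prefix hk) hn).symm

lemma subW_getD_even (w : List Bool) (t : ℕ) : (subW w).getD (2 * t) false = false := by
  induction w generalizing t with
  | nil => simp [subW]
  | cons x w ih =>
    rw [subW_cons]
    cases t with
    | zero => rfl
    | succ t =>
      rw [show 2 * (t + 1) = 2 * t + 1 + 1 by ring, List.getD_cons_succ, List.getD_cons_succ]
      exact ih t

lemma subW_getD_odd (w : List Bool) (t : ℕ) (h : t < w.length) :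
    (subW w).getD (2 * t + 1) false = !(w.getD t false) := by
  induction w generalizing t with
  | nil => simp at h
  | cons x w ih =>
    rw [subW_cons]
    cases t with
    | zero => rfl
    | succ t =>
      rw [show 2 * (t + 1) + 1 = 2 * t + 1 + 1 + 1 by ring, List.getD_cons_succ,
        List.getD_cons_succ, List.getD_cons_succ]
      exact ih t (by simpa using h)

lemma subWF_getD_even (w : List Bool) (t : ℕ) :
    (subW w ++ [false]).getD (2 * t) false = false := by
  induction w generalizing t with
  | nil =>
    cases t with
    | zero => rfl
    | succ t => rw [show 2 * (t + 1) = 2 * t + 1 + 1 by ring]; simp [subW]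
  | cons x w ih =>
    rw [subW_cons]
    cases t with
    | zero => rfl
    | succ t =>
      rw [show 2 * (t + 1) = 2 * t + 1 + 1 by ring, List.cons_append, List.cons_append,
        List.getD_cons_succ, List.getD_cons_succ]
      exact ih t

lemma subWF_getD_odd (w : List Bool) (t : ℕ) (h : t < w.length) :
    (subW w ++ [false]).getD (2 * t + 1) false = !(w.getD t false) := by
  induction w generalizing t with
  | nil => simp at h
  | cons x w ih =>
    rw [subW_cons]
    cases t with
    | zero => rfl
    | succ t =>
      rw [show 2 * (t + 1) + 1 = 2 * t + 1 + 1 + 1 by ring, List.cons_append, List.cons_append,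
        List.getD_cons_succ, List.getD_cons_succ, List.getD_cons_succ]
      exact ih t (by simpa using h)

lemma D_even (t : ℕ) : D (2 * t) = false := by
  show (A (2 * t + 1)).getD (2 * t) false = false
  rw [A_succ]
  exact subW_getD_even _ t

lemma D_odd (t : ℕ) : D (2 * t + 1) = !(D t) := by
  have ht : t < 2 ^ (2 * t + 1) := by
    calc t < 2 ^ t := Nat.lt_two_pow_self (n := t)
    _ ≤ 2 ^ (2 * t + 1) := Nat.pow_le_pow_right (by norm_num) (by omega)
  show (A (2 * t + 1 + 1)).getD (2 * t + 1) false = _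
  rw [A_succ, subW_getD_odd _ t (by rw [length_A]; exact ht), D_eq ht]

lemma A_cons (k : ℕ) : ∃ t, A k = false :: t := by
  induction k with
  | zero => exact ⟨[], rfl⟩
  | succ k ih =>
    obtain ⟨t, ht⟩ := ih
    exact ⟨true :: subW t, by rw [A_succ, ht, subW_cons]; rfl⟩

lemma E2_cons (m : ℕ) : ∃ t, E m 2 = false :: t := by
  obtain ⟨t, ht⟩ := A_cons (m - 1)
  exact ⟨t ++ (A m).dropLast, by simp [E, ht]⟩

lemma E_succ {m : ℕ} (hm : 1 ≤ m) : E (m + 1) 2 = subW (E m 2) ++ [false] := by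
  have hA : A m ≠ [] := by obtain ⟨t, ht⟩ := A_cons m; simp [ht]
  have h1 : A m = (A m).dropLast ++ [(A m).getLast hA] := (List.dropLast_append_getLast hA).symm
  have h3 : subW (A (m - 1)) = A m := by rw [← A_succ]; congr 1; omega
  have h4 : (A (m + 1)).dropLast = subW ((A m).dropLast) ++ [false] := by
    rw [A_succ m]
    conv_lhs => rw [h1]
    rw [subW_append]
    rw [show subW [(A m).getLast hA] = [false, !(A m).getLast hA] by simp [subW, sub_eq]]
    rw [show subW ((A m).dropLast) ++ [false, !((A m).getLast hA)]
        = (subW ((A m).dropLast) ++ [false]) ++ [!((A m).getLast hA)] by simp]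
    rw [List.dropLast_concat]
  have h5 : E (m + 1) 2 = A m ++ (A (m + 1)).dropLast := by simp [E]
  have h2 : E m 2 = A (m - 1) ++ (A m).dropLast := by simp [E]
  rw [h5, h4, h2, subW_append, h3, List.append_assoc]

lemma occurs_subW {w : List Bool} (hw : ∃ u, w = false :: u) (j : ℕ) :
    OccursD (subW w ++ [false]) j ↔ Odd j ∧ OccursD w ((j + 1) / 2) := by
  have hlen : (subW w ++ [false]).length = 2 * w.length + 1 := by
    simp [length_subW]
  constructor
  · rintro ⟨hj1, h⟩
    have hwpos : 0 < w.length := by obtain ⟨u, rfl⟩ := hw; simp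
    have h1 : D (j - 1 + 1) = true := by
      have h1' := h 1 (by rw [hlen]; omega)
      obtain ⟨u, rfl⟩ := hw
      rw [subW_cons] at h1'
      simpa using h1'
    have hodd : j % 2 = 1 := by
      by_contra hpar
      rw [show j - 1 + 1 = 2 * (j / 2) by omega, D_even] at h1
      simp at h1
    refine ⟨Nat.odd_iff.mpr hodd, by omega, ?_⟩
    intro s hs
    have h2 := h (2 * s + 1) (by rw [hlen]; omega)
    rw [show j - 1 + (2 * s + 1) = 2 * ((j - 1) / 2 + s) + 1 by omega, D_odd,
      subWF_getD_odd w s hs] at h2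
    rw [show (j + 1) / 2 - 1 + s = (j - 1) / 2 + s by omega]
    simpa using h2
  · rintro ⟨ho, h1, h2⟩
    have hodd := Nat.odd_iff.mp ho
    refine ⟨by omega, ?_⟩
    intro k hk
    rw [hlen] at hk
    rcases Nat.even_or_odd k with he | hko
    · obtain ⟨s, rfl⟩ : ∃ s, k = 2 * s := ⟨k / 2, by have := Nat.even_iff.mp he; omega⟩
      rw [show j - 1 + 2 * s = 2 * ((j - 1) / 2 + s) by omega, D_even, subWF_getD_even]
    · obtain ⟨s, rfl⟩ : ∃ s, k = 2 * s + 1 := ⟨k / 2, by have := Nat.odd_iff.mp hko; omega⟩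
      have hs : s < w.length := by omega
      rw [show j - 1 + (2 * s + 1) = 2 * ((j - 1) / 2 + s) + 1 by omega, D_odd,
        subWF_getD_odd w s hs, show (j - 1) / 2 + s = (j + 1) / 2 - 1 + s by omega, h2 s hs]

lemma key (m : ℕ) (hm : 1 ≤ m) : ∀ j ≤ 14 * 2 ^ (m - 1) + 1,
    (OccursD (E m 2) j ↔ j = 2 ^ m + 1 ∨ j = 3 * 2 ^ (m - 1) + 1 ∨ j = 10 * 2 ^ (m - 1) + 1 ∨
      j = 11 * 2 ^ (m - 1) + 1 ∨ j = 14 * 2 ^ (m - 1) + 1) := by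
  induction m, hm using Nat.le_induction with
  | base =>
    intro j hj
    norm_num at hj ⊢
    have hE : E 1 2 = [false, false] := by decide
    rw [hE]
    have hD : ∀ n, n < 16 → D n = [false, true, false, false, false, true, false, true, false,
        true, false, false, false, true, false, false].getD n false := by
      intro n hn
      rw [D_eq (show n < 2 ^ 4 by omega)]
      have hA4 : A 4 = [false, true, false, false, false, true, false, true, false,
        true, false, false, false, true, false, false] := by decide
      rw [hA4]
    have pair : OccursD [false, false] j ↔
        1 ≤ j ∧ D (j - 1 + 0) = false ∧ D (j - 1 + 1) = false := by
      constructor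
      · rintro ⟨ha, hb⟩
        exact ⟨ha, hb 0 (by norm_num), hb 1 (by norm_num)⟩
      · rintro ⟨ha, hb, hc⟩
        refine ⟨ha, ?_⟩
        intro k hk
        simp only [List.length_cons, List.length_nil] at hk
        interval_cases k
        · exact hb
        · exact hc
    rcases Nat.eq_zero_or_pos j with rfl | hj1
    · rw [pair]; simp
    · rw [pair, Nat.add_zero, show j - 1 + 1 = j by omega,
        hD (j - 1) (by omega), hD j (by omega)]
      interval_cases j <;> decide
  | succ m hm ih =>
    intro j hj
    simp only [Nat.add_sub_cancel] at hj ⊢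
    have hq : 1 ≤ 2 ^ (m - 1) := Nat.one_le_two_pow
    have h2 : 2 ^ m = 2 * 2 ^ (m - 1) := by
      rw [← pow_succ']; congr 1; omega
    have h3 : 2 ^ (m + 1) = 4 * 2 ^ (m - 1) := by
      rw [pow_succ, h2]; ring
    rw [E_succ hm, occurs_subW (E2_cons m), ih ((j + 1) / 2) (by omega), Nat.odd_iff]
    omega

end PD

open PD
/-- For every `m ≥ 1`, the first five occurrences of `E m 2` in the doubling
sequence start at positions `2^m+1`, `3·2^(m-1)+1`, `10·2^(m-1)+1`, `11·2^(m-1)+1`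
and `14·2^(m-1)+1`. -/
theorem doubling_E2_first_five (m : ℕ) (hm : 1 ≤ m) :
    L (E m 2) 1 = 2 ^ m + 1 ∧ L (E m 2) 2 = 3 * 2 ^ (m - 1) + 1 ∧
      L (E m 2) 3 = 10 * 2 ^ (m - 1) + 1 ∧ L (E m 2) 4 = 11 * 2 ^ (m - 1) + 1 ∧
      L (E m 2) 5 = 14 * 2 ^ (m - 1) + 1 := by
  classical
  have hk := key m hm
  have hq : 1 ≤ 2 ^ (m - 1) := Nat.one_le_two_pow
  have h2 : 2 ^ m = 2 * 2 ^ (m - 1) := by rw [← pow_succ']; congr 1; omega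
  set q := 2 ^ (m - 1) with hqdef
  set Q := OccursD (E m 2) with hQdef
  have hno : ∀ k ≤ 14 * q + 1,
      (Q k ↔ k = 2 * q + 1 ∨ k = 3 * q + 1 ∨ k = 10 * q + 1 ∨ k = 11 * q + 1 ∨
        k = 14 * q + 1) := by
    intro k hk'
    rw [hk k hk']
    omega
  have hQ1 : Q (2 * q + 1) := (hno _ (by omega)).mpr (by omega)
  have hQ2 : Q (3 * q + 1) := (hno _ (by omega)).mpr (by omega)
  have hQ3 : Q (10 * q + 1) := (hno _ (by omega)).mpr (by omega)
  have hQ4 : Q (11 * q + 1) := (hno _ (by omega)).mpr (by omega)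
  have hQ5 : Q (14 * q + 1) := (hno _ (by omega)).mpr (by omega)
  have hc0 : Nat.count Q (2 * q + 1) = 0 := by
    rw [Nat.count_eq_card_filter_range, Finset.card_eq_zero, Finset.filter_eq_empty_iff]
    intro k hk'
    rw [Finset.mem_range] at hk'
    rw [hno k (by omega)]
    omega
  have hc1 : Nat.count Q (3 * q + 1) = 1 := by
    rw [Nat.count_eq_card_filter_range]
    have : (Finset.range (3 * q + 1)).filter Q = {2 * q + 1} := by
      ext k
      simp only [Finset.mem_filter, Finset.mem_range, Finset.mem_singleton]
      constructor
      · rintro ⟨ha, hb⟩; rw [hno k (by omega)] at hb; omega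
      · rintro rfl; exact ⟨by omega, hQ1⟩
    rw [this, Finset.card_singleton]
  have hc2 : Nat.count Q (10 * q + 1) = 2 := by
    rw [Nat.count_eq_card_filter_range]
    have : (Finset.range (10 * q + 1)).filter Q = {2 * q + 1, 3 * q + 1} := by
      ext k
      simp only [Finset.mem_filter, Finset.mem_range, Finset.mem_insert, Finset.mem_singleton]
      constructor
      · rintro ⟨ha, hb⟩; rw [hno k (by omega)] at hb; omega
      · rintro (rfl | rfl)
        · exact ⟨by omega, hQ1⟩
        · exact ⟨by omega, hQ2⟩
    rw [this, Finset.card_insert_of_notMem (by simp; omega), Finset.card_singleton]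
  have hc3 : Nat.count Q (11 * q + 1) = 3 := by
    rw [Nat.count_eq_card_filter_range]
    have : (Finset.range (11 * q + 1)).filter Q = {2 * q + 1, 3 * q + 1, 10 * q + 1} := by
      ext k
      simp only [Finset.mem_filter, Finset.mem_range, Finset.mem_insert, Finset.mem_singleton]
      constructor
      · rintro ⟨ha, hb⟩; rw [hno k (by omega)] at hb; omega
      · rintro (rfl | rfl | rfl)
        · exact ⟨by omega, hQ1⟩
        · exact ⟨by omega, hQ2⟩
        · exact ⟨by omega, hQ3⟩
    rw [this, Finset.card_insert_of_notMem (by simp; omega),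
      Finset.card_insert_of_notMem (by simp; omega), Finset.card_singleton]
  have hc4 : Nat.count Q (14 * q + 1) = 4 := by
    rw [Nat.count_eq_card_filter_range]
    have : (Finset.range (14 * q + 1)).filter Q
        = {2 * q + 1, 3 * q + 1, 10 * q + 1, 11 * q + 1} := by
      ext k
      simp only [Finset.mem_filter, Finset.mem_range, Finset.mem_insert, Finset.mem_singleton]
      constructor
      · rintro ⟨ha, hb⟩; rw [hno k (by omega)] at hb; omega
      · rintro (rfl | rfl | rfl | rfl)
        · exact ⟨by omega, hQ1⟩
        · exact ⟨by omega, hQ2⟩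
        · exact ⟨by omega, hQ3⟩
        · exact ⟨by omega, hQ4⟩
    rw [this, Finset.card_insert_of_notMem (by simp; omega),
      Finset.card_insert_of_notMem (by simp; omega),
      Finset.card_insert_of_notMem (by simp; omega), Finset.card_singleton]
  have n0 := Nat.nth_count hQ1; rw [hc0] at n0
  have n1 := Nat.nth_count hQ2; rw [hc1] at n1
  have n2 := Nat.nth_count hQ3; rw [hc2] at n2
  have n3 := Nat.nth_count hQ4; rw [hc3] at n3
  have n4 := Nat.nth_count hQ5; rw [hc4] at n4
  refine ⟨?_, ?_, ?_, ?_, ?_⟩ <;> unfold L <;> rw [← hQdef]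
  · rw [show (1 : ℕ) - 1 = 0 from rfl, n0]; omega
  · rw [show (2 : ℕ) - 1 = 1 from rfl, n1]
  · rw [show (3 : ℕ) - 1 = 2 from rfl, n2]
  · rw [show (4 : ℕ) - 1 = 3 from rfl, n3]
  · rw [show (5 : ℕ) - 1 = 4 from rfl, n4]
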